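/- Let n, m, p, k ∈ ℕ with p > n and p > m, and let s ≠ t be vertices of the n×m grid graph G_{n×m} that lie in the same connected component (which G_{n×m} is connected, so any two vertices). Then there exists a family of p s-t paths in G_{n×m} with at most k shared edges if and only if the graph distance between s and t is at most k. -/

import Mathlib

/-- The `n × m` grid graph: vertices are pairs `(x, y)` of naturals with `x < n`
and `y < m`, and two vertices are adjacent iff they are at Manhattan distance 1. -/
def gridGraph (n m : ℕ) : SimpleGraph (ℕ × ℕ) where
  Adj u v := u.1 < n ∧ u.2 < m ∧ v.1 < n ∧ v.2 < m ∧
    ((u.1 : ℤ) - v.1).natAbs + ((u.2 : ℤ) - v.2).natAbs = 1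
  symm := by
    constructor
    rintro u v ⟨h1, h2, h3, h4, h5⟩
    exact ⟨h3, h4, h1, h2, by omega⟩
  loopless := by
    constructor
    rintro u ⟨-, -, -, -, h⟩
    omega

/-- The set of shared edges of a family of `s`-`t` walks (an edge is shared if it
occurs in two walks with distinct indices). -/
def sharedEdges {V : Type*} {G : SimpleGraph V} {s t : V} {p : ℕ}
    (P : Fin p → G.Walk s t) : Set (Sym2 V) :=
  {e | ∃ i j, i ≠ j ∧ e ∈ (P i).edges ∧ e ∈ (P j).edges}

namespace GridAux

/-- Construction of a walk of Manhattan length between valid vertices. -/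
lemma exists_walk (n m : ℕ) : ∀ (d : ℕ) (a b : ℕ × ℕ), a.1 < n → a.2 < m → b.1 < n → b.2 < m →
    ((a.1 : ℤ) - b.1).natAbs + ((a.2 : ℤ) - b.2).natAbs = d →
    ∃ w : (gridGraph n m).Walk a b, w.length = d := by
  intro d
  induction d with
  | zero =>
    intro a b _ _ _ _ hd
    have : a = b := by
      have h1 : a.1 = b.1 := by omega
      have h2 : a.2 = b.2 := by omega
      exact Prod.ext h1 h2
    subst this
    exact ⟨SimpleGraph.Walk.nil, rfl⟩
  | succ d ih =>
    intro a b ha1 ha2 hb1 hb2 hd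
    by_cases h1 : a.1 < b.1
    · have hadj : (gridGraph n m).Adj a (a.1 + 1, a.2) := by
        refine ⟨ha1, ha2, by omega, ha2, by simp <;> omega⟩
      obtain ⟨w, hw⟩ := ih (a.1 + 1, a.2) b (by omega) ha2 hb1 hb2 (by simp <;> omega)
      exact ⟨SimpleGraph.Walk.cons hadj w, by simp [hw]⟩
    · by_cases h2 : b.1 < a.1
      · have hadj : (gridGraph n m).Adj a (a.1 - 1, a.2) := by
          refine ⟨ha1, ha2, by omega, ha2, by simp <;> omega⟩
        obtain ⟨w, hw⟩ := ih (a.1 - 1, a.2) b (by omega) ha2 hb1 hb2 (by simp <;> omega)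
        exact ⟨SimpleGraph.Walk.cons hadj w, by simp [hw]⟩
      · by_cases h3 : a.2 < b.2
        · have hadj : (gridGraph n m).Adj a (a.1, a.2 + 1) := by
            refine ⟨ha1, ha2, ha1, by omega, by simp <;> omega⟩
          obtain ⟨w, hw⟩ := ih (a.1, a.2 + 1) b ha1 (by omega) hb1 hb2 (by simp <;> omega)
          exact ⟨SimpleGraph.Walk.cons hadj w, by simp [hw]⟩
        · have h4 : b.2 < a.2 := by omega
          have hadj : (gridGraph n m).Adj a (a.1, a.2 - 1) := by
            refine ⟨ha1, ha2, ha1, by omega, by simp <;> omega⟩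
          obtain ⟨w, hw⟩ := ih (a.1, a.2 - 1) b ha1 (by omega) hb1 hb2 (by simp <;> omega)
          exact ⟨SimpleGraph.Walk.cons hadj w, by simp [hw]⟩

/-- Crossing lemma, first coordinate, increasing. -/
lemma cross_fst {n m : ℕ} {a b : ℕ × ℕ} (w : (gridGraph n m).Walk a b)
    {x : ℕ} (ha : a.1 ≤ x) (hb : x < b.1) :
    ∃ y, y < m ∧ s((x, y), (x + 1, y)) ∈ w.edges := by
  induction w with
  | nil => omega
  | @cons u c b h w ih =>
    by_cases hc : c.1 ≤ x
    · obtain ⟨y, hy, hmem⟩ := ih hc hb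
      exact ⟨y, hy, by simp [hmem]⟩
    · obtain ⟨hu1, hu2, hc1, hc2, habs⟩ := h
      have h1 : u.1 = x := by omega
      have h2 : c.1 = x + 1 := by omega
      have h3 : u.2 = c.2 := by omega
      refine ⟨u.2, hu2, ?_⟩
      have hu : u = (x, u.2) := Prod.ext h1 rfl
      have hcc : c = (x + 1, u.2) := Prod.ext h2 h3.symm
      rw [← hu, ← hcc]
      exact List.mem_cons_self ..

/-- Crossing lemma, second coordinate, increasing. -/
lemma cross_snd {n m : ℕ} {a b : ℕ × ℕ} (w : (gridGraph n m).Walk a b)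
    {y : ℕ} (ha : a.2 ≤ y) (hb : y < b.2) :
    ∃ x, x < n ∧ s((x, y), (x, y + 1)) ∈ w.edges := by
  induction w with
  | nil => omega
  | @cons u c b h w ih =>
    by_cases hc : c.2 ≤ y
    · obtain ⟨x, hx, hmem⟩ := ih hc hb
      exact ⟨x, hx, by simp [hmem]⟩
    · obtain ⟨hu1, hu2, hc1, hc2, habs⟩ := h
      have h1 : u.2 = y := by omega
      have h2 : c.2 = y + 1 := by omega
      have h3 : u.1 = c.1 := by omega
      refine ⟨u.1, hu1, ?_⟩
      have hu : u = (u.1, y) := Prod.ext rfl h1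
      have hcc : c = (u.1, y + 1) := Prod.ext h3.symm h2
      rw [← hu, ← hcc]
      exact List.mem_cons_self ..

/-- Every `s`-`t` walk crosses every vertical cut between `s` and `t`. -/
lemma cross_fst' {n m : ℕ} {a b : ℕ × ℕ} (w : (gridGraph n m).Walk a b)
    {x : ℕ} (h : (a.1 ≤ x ∧ x < b.1) ∨ (b.1 ≤ x ∧ x < a.1)) :
    ∃ y, y < m ∧ s((x, y), (x + 1, y)) ∈ w.edges := by
  rcases h with ⟨h1, h2⟩ | ⟨h1, h2⟩
  · exact cross_fst w h1 h2
  · obtain ⟨y, hy, hmem⟩ := cross_fst w.reverse h1 h2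
    rw [SimpleGraph.Walk.edges_reverse, List.mem_reverse] at hmem
    exact ⟨y, hy, hmem⟩

lemma cross_snd' {n m : ℕ} {a b : ℕ × ℕ} (w : (gridGraph n m).Walk a b)
    {y : ℕ} (h : (a.2 ≤ y ∧ y < b.2) ∨ (b.2 ≤ y ∧ y < a.2)) :
    ∃ x, x < n ∧ s((x, y), (x, y + 1)) ∈ w.edges := by
  rcases h with ⟨h1, h2⟩ | ⟨h1, h2⟩
  · exact cross_snd w h1 h2
  · obtain ⟨x, hx, hmem⟩ := cross_snd w.reverse h1 h2
    rw [SimpleGraph.Walk.edges_reverse, List.mem_reverse] at hmem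
    exact ⟨x, hx, hmem⟩

/-- Pigeonhole: a shared edge in each vertical cut. -/
lemma shared_cut_fst {n m p : ℕ} (hm : m < p) {s t : ℕ × ℕ}
    (P : Fin p → (gridGraph n m).Walk s t) {x : ℕ}
    (hcross : ∀ i, ∃ y, y < m ∧ s((x, y), (x + 1, y)) ∈ (P i).edges) :
    ∃ y, s((x, y), (x + 1, y)) ∈ sharedEdges P := by
  choose Y hY1 hY2 using hcross
  have := Fintype.exists_ne_map_eq_of_card_lt (fun i => (⟨Y i, hY1 i⟩ : Fin m))
    (by simpa using hm)
  obtain ⟨i, j, hij, hYij⟩ := this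
  have hYeq : Y i = Y j := by simpa using hYij
  refine ⟨Y i, i, j, hij, hY2 i, ?_⟩
  rw [hYeq]; exact hY2 j

lemma shared_cut_snd {n m p : ℕ} (hn : n < p) {s t : ℕ × ℕ}
    (P : Fin p → (gridGraph n m).Walk s t) {y : ℕ}
    (hcross : ∀ i, ∃ x, x < n ∧ s((x, y), (x, y + 1)) ∈ (P i).edges) :
    ∃ x, s((x, y), (x, y + 1)) ∈ sharedEdges P := by
  choose X hX1 hX2 using hcross
  have := Fintype.exists_ne_map_eq_of_card_lt (fun i => (⟨X i, hX1 i⟩ : Fin n))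
    (by simpa using hn)
  obtain ⟨i, j, hij, hXij⟩ := this
  have hXeq : X i = X j := by simpa using hXij
  refine ⟨X i, i, j, hij, hX2 i, ?_⟩
  rw [hXeq]; exact hX2 j

/-- Counting lemma: disjoint cuts each meeting `S` force `S` to be large. -/
lemma card_lower (S : Set (Sym2 (ℕ × ℕ))) (hS : S.Finite) (lo1 hi1 lo2 hi2 : ℕ)
    (h1 : ∀ x, lo1 ≤ x → x < hi1 → ∃ y, s((x, y), (x + 1, y)) ∈ S)
    (h2 : ∀ y, lo2 ≤ y → y < hi2 → ∃ x, s((x, y), (x, y + 1)) ∈ S) :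
    (hi1 - lo1) + (hi2 - lo2) ≤ S.ncard := by
  choose Y hY using h1
  choose X hX using h2
  have : Finite ↥S := hS.to_subtype
  set F : Fin (hi1 - lo1) ⊕ Fin (hi2 - lo2) → ↥S := fun v =>
    match v with
    | Sum.inl i => ⟨_, hY (lo1 + i.val) (by omega) (by omega)⟩
    | Sum.inr j => ⟨_, hX (lo2 + j.val) (by omega) (by omega)⟩ with hF
  have hinj : Function.Injective F := by
    rintro (i | i) (j | j) hFeq <;>
      simp only [hF, Subtype.mk.injEq, Sym2.eq_iff, Prod.mk.injEq] at hFeq <;>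
      first
      | (simp only [Sum.inl.injEq, Sum.inr.injEq, Fin.ext_iff]; omega)
      | (exfalso; omega)
  have := Nat.card_le_card_of_injective F hinj
  simpa [Nat.card_sum, Nat.card_coe_set_eq] using this

end GridAux

/-- On a `p`-small grid (`p > n` and `p > m`), there is a family of `p` `s`-`t`
paths with at most `k` shared edges iff the distance from `s` to `t` is at most `k`. -/
theorem stmt3 (n m p k : ℕ) (hn : n < p) (hm : m < p)
    (s t : ℕ × ℕ) (hst : s ≠ t)
    (hs : s.1 < n ∧ s.2 < m) (ht : t.1 < n ∧ t.2 < m) :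
    (∃ P : Fin p → (gridGraph n m).Walk s t,
      (∀ i, (P i).IsPath) ∧ (sharedEdges P).ncard ≤ k) ↔
    (gridGraph n m).dist s t ≤ k := by
  constructor
  · rintro ⟨P, _, hcard⟩
    -- the shared edge set is finite
    have hfin : (sharedEdges P).Finite := by
      apply Set.Finite.subset (Set.finite_iUnion (fun i : Fin p => (P i).edges.toFinset.finite_toSet))
      rintro e ⟨i, j, hij, hei, hej⟩
      exact Set.mem_iUnion.2 ⟨i, by simpa using hei⟩
    -- shared edges in each vertical cut
    have h1 : ∀ x, min s.1 t.1 ≤ x → x < max s.1 t.1 →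
        ∃ y, s((x, y), (x + 1, y)) ∈ sharedEdges P := by
      intro x hx1 hx2
      exact GridAux.shared_cut_fst hm P (fun i => GridAux.cross_fst' (P i) (by omega))
    have h2 : ∀ y, min s.2 t.2 ≤ y → y < max s.2 t.2 →
        ∃ x, s((x, y), (x, y + 1)) ∈ sharedEdges P := by
      intro y hy1 hy2
      exact GridAux.shared_cut_snd hn P (fun i => GridAux.cross_snd' (P i) (by omega))
    have hlow := GridAux.card_lower (sharedEdges P) hfin _ _ _ _ h1 h2
    -- distance is at most the Manhattan distance
    obtain ⟨w, hw⟩ := GridAux.exists_walk n m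
      (((s.1 : ℤ) - t.1).natAbs + ((s.2 : ℤ) - t.2).natAbs) s t hs.1 hs.2 ht.1 ht.2 rfl
    have hdist := SimpleGraph.dist_le w
    rw [hw] at hdist
    have : (max s.1 t.1 - min s.1 t.1) + (max s.2 t.2 - min s.2 t.2)
        = ((s.1 : ℤ) - t.1).natAbs + ((s.2 : ℤ) - t.2).natAbs := by omega
    omega
  · intro hdist
    obtain ⟨w0, _⟩ := GridAux.exists_walk n m
      (((s.1 : ℤ) - t.1).natAbs + ((s.2 : ℤ) - t.2).natAbs) s t hs.1 hs.2 ht.1 ht.2 rfl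
    have hreach : (gridGraph n m).Reachable s t := ⟨w0⟩
    obtain ⟨w, hw⟩ := hreach.exists_walk_length_eq_dist
    refine ⟨fun _ => w.bypass, fun _ => w.bypass_isPath, ?_⟩
    have hsub : sharedEdges (fun _ : Fin p => w.bypass) = ↑w.bypass.edges.toFinset := by
      ext e
      constructor
      · rintro ⟨i, j, hij, hei, hej⟩
        simpa using hei
      · intro he
        have h2p : 2 ≤ p := by omega
        refine ⟨⟨0, by omega⟩, ⟨1, by omega⟩, by simp [Fin.ext_iff], by simpa using he,
          by simpa using he⟩
    rw [hsub, Set.ncard_coe_finset]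
    calc w.bypass.edges.toFinset.card ≤ w.bypass.edges.length := List.toFinset_card_le _
      _ = w.bypass.length := w.bypass.length_edges
      _ ≤ w.length := w.length_bypass_le
      _ ≤ k := by omega
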